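/- Let G be a simple graph, u, v vertices of G, and let G' = G[u→v] be the graph obtained by the Kelmans operation (removing all edges from u to vertices in N(u) \ N[v] and adding edges from v to those vertices). Then for any real p ≥ 2, the degree power sum ∑_{w ∈ V(G)} (deg_{G'} w)^p is at least ∑_{w ∈ V(G)} (deg_G w)^p. -/

import Mathlib

/-- The Kelmans operation `G[u → v]`: every edge `wu` with `w ∈ N(u) \\ N[v]` is removed
and replaced by the edge `wv`. -/
def kelmans {V : Type*} (G : SimpleGraph V) (u v : V) : SimpleGraph V where
  Adj x y := x ≠ y ∧
    ((G.Adj x y ∧ ¬ ((x = u ∧ G.Adj u y ∧ ¬ G.Adj v y ∧ y ≠ v) ∨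
                     (y = u ∧ G.Adj u x ∧ ¬ G.Adj v x ∧ x ≠ v))) ∨
     ((x = v ∧ G.Adj u y ∧ ¬ G.Adj v y ∧ y ≠ v) ∨
      (y = v ∧ G.Adj u x ∧ ¬ G.Adj v x ∧ x ≠ v)))
  symm := by
    constructor
    rintro x y ⟨hxy, h⟩
    refine ⟨hxy.symm, ?_⟩
    have hsymm : G.Adj x y ↔ G.Adj y x := ⟨SimpleGraph.Adj.symm, SimpleGraph.Adj.symm⟩
    tauto
  loopless := by constructor; rintro x ⟨h, -⟩; exact h rfl

lemma convex_pair_aux {f : ℝ → ℝ} (hf : ConvexOn ℝ (Set.Ici 0) f)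
    {a b c d : ℝ} (hc : 0 ≤ c) (hca : c ≤ a) (had : a ≤ d) (hcb : c ≤ b) (hbd : b ≤ d)
    (hsum : a + b = c + d) : f a + f b ≤ f c + f d := by
  rcases eq_or_lt_of_le (hca.trans had) with h | hcd
  · have ha : a = c := le_antisymm (by linarith) hca
    have hb : b = d := by linarith
    rw [ha, hb]
  · set t : ℝ := (d - a) / (d - c) with ht
    have hdc : (0:ℝ) < d - c := by linarith
    have ht0 : 0 ≤ t := div_nonneg (by linarith) hdc.le
    have ht1 : t ≤ 1 := (div_le_one hdc).mpr (by linarith)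
    have hcmem : c ∈ Set.Ici (0:ℝ) := hc
    have hdmem : d ∈ Set.Ici (0:ℝ) := le_trans hc hcd.le
    have hA : t • c + (1 - t) • d = a := by
      have h' : t * (d - c) = d - a := by rw [ht, div_mul_cancel₀ _ hdc.ne']
      simp only [smul_eq_mul]
      nlinarith [h']
    have hB : (1 - t) • c + t • d = b := by
      have : t * (d - c) = d - a := by rw [ht, div_mul_cancel₀ _ hdc.ne']
      have hb' : b = c + (d - a) := by linarith
      simp only [smul_eq_mul]
      nlinarith [this]
    have h1 := hf.2 hcmem hdmem ht0 (by linarith : (0:ℝ) ≤ 1 - t) (by ring)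
    have h2 := hf.2 hcmem hdmem (by linarith : (0:ℝ) ≤ 1 - t) ht0 (by ring)
    rw [hA] at h1
    rw [hB] at h2
    have := add_le_add h1 h2
    calc f a + f b ≤ (t • f c + (1 - t) • f d) + ((1 - t) • f c + t • f d) := this
      _ = f c + f d := by simp only [smul_eq_mul]; ring

/-- The degree power sum (with real exponent `p ≥ 2`) does not decrease
under the Kelmans operation. -/
theorem stmt_1 {V : Type*} [Fintype V] (G : SimpleGraph V) (u v : V) (p : ℝ) (hp : 2 ≤ p) :
    ∑ w : V, ((G.neighborSet w).ncard : ℝ) ^ p ≤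
      ∑ w : V, (((kelmans G u v).neighborSet w).ncard : ℝ) ^ p := by
  classical
  have hp1 : (1:ℝ) ≤ p := by linarith
  by_cases huv : u = v
  · subst huv
    apply le_of_eq
    have hGG : kelmans G u u = G := by
      ext x y
      simp only [kelmans]
      constructor
      · rintro ⟨hxy, h⟩; tauto
      · intro h; exact ⟨h.ne, Or.inl ⟨h, by tauto⟩⟩
    rw [hGG]
  · -- main case
    set S : Set V := {w | G.Adj u w ∧ ¬ G.Adj v w ∧ w ≠ v} with hSdef
    have hSfin : S.Finite := Set.toFinite S
    -- neighbor set of u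
    have hNu : (kelmans G u v).neighborSet u = G.neighborSet u \ S := by
      ext y
      simp only [SimpleGraph.mem_neighborSet, kelmans, Set.mem_diff, hSdef, Set.mem_setOf_eq]
      have h1 : ¬ G.Adj u u := G.irrefl
      have h2 : G.Adj u y ↔ G.Adj y u := ⟨SimpleGraph.Adj.symm, SimpleGraph.Adj.symm⟩
      have h3 : G.Adj u y → u ≠ y := fun h => h.ne
      constructor
      · rintro ⟨hne, h⟩; tauto
      · rintro ⟨h, hnS⟩; exact ⟨(h3 h), by tauto⟩
    -- neighbor set of v
    have hNv : (kelmans G u v).neighborSet v = G.neighborSet v ∪ S := by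
      ext y
      simp only [SimpleGraph.mem_neighborSet, kelmans, Set.mem_union, hSdef, Set.mem_setOf_eq]
      have h1 : ¬ G.Adj v v := G.irrefl
      have h2 : G.Adj v y ↔ G.Adj y v := ⟨SimpleGraph.Adj.symm, SimpleGraph.Adj.symm⟩
      have h3 : G.Adj v y → v ≠ y := fun h => h.ne
      constructor
      · rintro ⟨hne, h⟩; tauto
      · rintro (h | ⟨ha, hb, hc⟩)
        · exact ⟨h3 h, by tauto⟩
        · exact ⟨Ne.symm hc, by tauto⟩
    -- other vertices keep their degree
    have hNw : ∀ w, w ≠ u → w ≠ v →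
        (((kelmans G u v).neighborSet w).ncard : ℝ) = ((G.neighborSet w).ncard : ℝ) := by
      intro w hwu hwv
      have hsym : ∀ a b : V, G.Adj a b ↔ G.Adj b a :=
        fun a b => ⟨SimpleGraph.Adj.symm, SimpleGraph.Adj.symm⟩
      by_cases hwS : w ∈ S
      · obtain ⟨hadjuw, hnadjvw, _⟩ : G.Adj u w ∧ ¬ G.Adj v w ∧ w ≠ v := hwS
        have hEq : (kelmans G u v).neighborSet w = insert v (G.neighborSet w \ {u}) := by
          ext y
          simp only [SimpleGraph.mem_neighborSet, kelmans, Set.mem_insert_iff,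
            Set.mem_diff, Set.mem_singleton_iff]
          constructor
          · rintro ⟨hne, h⟩
            rcases h with ⟨hadj, hno⟩ | (⟨hyv, _⟩ | ⟨hyv, _⟩)
            · right
              refine ⟨hadj, ?_⟩
              intro hyu
              exact hno (Or.inr ⟨hyu, hadjuw, hnadjvw, hwv⟩)
            · exact absurd hyv hwv
            · left; exact hyv
          · rintro (hyv | ⟨hadj, hyu⟩)
            · subst hyv
              exact ⟨hwv, Or.inr (Or.inr ⟨rfl, hadjuw, hnadjvw, hwv⟩)⟩
            · refine ⟨hadj.ne, Or.inl ⟨hadj, ?_⟩⟩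
              rintro (⟨hwu', _⟩ | ⟨hyu', _⟩)
              · exact hwu hwu'
              · exact hyu hyu'
        rw [hEq]
        have hvnot : v ∉ G.neighborSet w \ {u} := by
          rintro ⟨hv, -⟩
          exact hnadjvw ((hsym w v).mp hv)
        have humem : u ∈ G.neighborSet w := (hsym u w).mp hadjuw
        rw [Set.ncard_insert_of_notMem hvnot (Set.toFinite _)]
        rw [Set.ncard_diff_singleton_add_one humem (Set.toFinite _)]
      · have hEq : (kelmans G u v).neighborSet w = G.neighborSet w := by
          ext y
          simp only [SimpleGraph.mem_neighborSet, kelmans]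
          constructor
          · rintro ⟨hne, h⟩
            rcases h with ⟨hadj, _⟩ | (⟨hyv, _⟩ | ⟨hyv, h1, h2, h3⟩)
            · exact hadj
            · exact absurd hyv hwv
            · exact absurd ⟨h1, h2, h3⟩ hwS
          · intro h
            refine ⟨h.ne, Or.inl ⟨h, ?_⟩⟩
            rintro (⟨hwu', _⟩ | ⟨hyu, h1, h2, h3⟩)
            · exact hwu hwu'
            · exact hwS ⟨h1, h2, h3⟩
        rw [hEq]
    -- cardinal facts
    have hSsub : S ⊆ G.neighborSet u := by
      rintro w ⟨h1, -, -⟩; exact h1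
    have hSdisj : Disjoint (G.neighborSet v) S := by
      rw [Set.disjoint_left]
      rintro w hw ⟨-, h2, -⟩
      exact h2 hw
    set A : ℕ := (G.neighborSet u).ncard with hA
    set B : ℕ := (G.neighborSet v).ncard with hB
    set s : ℕ := S.ncard with hs
    have hsA : s ≤ A := Set.ncard_le_ncard hSsub (Set.toFinite _)
    have hcu : ((kelmans G u v).neighborSet u).ncard = A - s := by
      rw [hNu, Set.ncard_diff hSsub (Set.toFinite _)]
    have hcv : ((kelmans G u v).neighborSet v).ncard = B + s := by
      rw [hNv, Set.union_comm, Set.ncard_union_eq hSdisj.symm (Set.toFinite _) (Set.toFinite _),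
        add_comm]
    -- A ≤ B + s
    have hkey : A ≤ B + s := by
      have : (G.neighborSet u).ncard ≤ (G.neighborSet v ∪ S).ncard := by
        apply Set.ncard_le_ncard_of_injOn (fun w => if w = v then u else w)
        · intro w hw
          by_cases hwv : w = v
          · subst hwv
            simp only [if_pos rfl]
            left
            exact hw.symm
          · simp only [if_neg hwv]
            by_cases hvw : G.Adj v w
            · left; exact hvw
            · right; exact ⟨hw, fun h => hvw h, hwv⟩
        · intro w hw w' hw' heq
          by_cases h1 : w = v <;> by_cases h2 : w' = v
          · rw [h1, h2]
          · simp only [if_pos h1, if_neg h2] at heq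
            exfalso; rw [← heq] at hw'; exact G.irrefl hw'
          · simp only [if_neg h1, if_pos h2] at heq
            exfalso; rw [heq] at hw; exact G.irrefl hw
          · simpa [if_neg h1, if_neg h2] using heq
      rwa [Set.ncard_union_eq hSdisj (Set.toFinite _) (Set.toFinite _)] at this
    -- split the sums
    rw [← Finset.sum_compl_add_sum ({u, v} : Finset V)
        (fun w => ((G.neighborSet w).ncard : ℝ) ^ p),
      ← Finset.sum_compl_add_sum ({u, v} : Finset V)
        (fun w => (((kelmans G u v).neighborSet w).ncard : ℝ) ^ p)]
    apply add_le_add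
    · apply le_of_eq
      apply Finset.sum_congr rfl
      intro w hw
      simp only [Finset.mem_compl, Finset.mem_insert, Finset.mem_singleton, not_or] at hw
      rw [hNw w hw.1 hw.2]
    · rw [Finset.sum_pair huv, Finset.sum_pair huv, hcu, hcv]
      have hcastA : (((A - s : ℕ)) : ℝ) = (A : ℝ) - (s : ℝ) := by
        rw [Nat.cast_sub hsA]
      have hcastB : (((B + s : ℕ)) : ℝ) = (B : ℝ) + (s : ℝ) := by push_cast; ring
      rw [hcastA, hcastB]
      have hf := convexOn_rpow hp1
      have hsA' : (s:ℝ) ≤ (A:ℝ) := Nat.cast_le.mpr hsA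
      have hkey' : (A:ℝ) ≤ (B:ℝ) + (s:ℝ) := by
        have := (Nat.cast_le (α := ℝ)).mpr hkey; push_cast at this; linarith
      have hs0 : (0:ℝ) ≤ (s:ℝ) := Nat.cast_nonneg s
      have hconv := convex_pair_aux hf
        (a := (A:ℝ)) (b := (B:ℝ)) (c := (A:ℝ) - s) (d := (B:ℝ) + s)
        (by linarith) (by linarith) (by linarith) (by linarith) (by linarith) (by ring)
      exact hconv
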